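/- Let (W, S) be a Coxeter system with S finite and ε an automorphism. There is a bijection from S(J, ε) to T(J, ε) given by (J_n, J'_n, u_n)_{n≥0} ↦ (J_n, u_0 u_1 ⋯ u_n)_{n≥0}. -/

import Mathlib

namespace Lusztig

variable {B : Type*} {W : Type*} [Group W] {M : CoxeterMatrix B}

/-- The standard parabolic subgroup `W_K` generated by the simple reflections in `K`. -/
def WP (cs : CoxeterSystem M W) (K : Set B) : Subgroup W :=
  Subgroup.closure (cs.simple '' K)

/-- `w` is the unique minimal length element of its left coset `W_K w`
(i.e. `w ∈ ᴷW`). -/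
def IsMinL (cs : CoxeterSystem M W) (K : Set B) (w : W) : Prop :=
  ∀ a ∈ WP cs K, a * w ≠ w → cs.length w < cs.length (a * w)

/-- `w` is the unique minimal length element of its right coset `w W_K`
(i.e. `w ∈ Wᴷ`). -/
def IsMinR (cs : CoxeterSystem M W) (K : Set B) (w : W) : Prop :=
  ∀ b ∈ WP cs K, w * b ≠ w → cs.length w < cs.length (w * b)

/-- `x` is the unique minimal length element of its double coset `W_K x W_{K'}`
(i.e. `x ∈ ᴷWᴷ'`). -/
def IsMinDC (cs : CoxeterSystem M W) (K K' : Set B) (x : W) : Prop :=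
  ∀ a ∈ WP cs K, ∀ b ∈ WP cs K', a * x * b ≠ x → cs.length x < cs.length (a * x * b)

/-- `x` is the unique minimal length element of the double coset `W_K g W_{K'}`. -/
def IsMinOf (cs : CoxeterSystem M W) (K K' : Set B) (g x : W) : Prop :=
  (∃ a ∈ WP cs K, ∃ b ∈ WP cs K', x = a * g * b) ∧
  ∀ a ∈ WP cs K, ∀ b ∈ WP cs K', a * g * b ≠ x → cs.length x < cs.length (a * g * b)

/-- `Ad(x)J ∩ S`, as a set of indices of simple reflections:
the set of `s` with `simple s = x * (simple t) * x⁻¹` for some `t ∈ J`. -/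
def AdSet (cs : CoxeterSystem M W) (x : W) (J : Set B) : Set B :=
  {s | ∃ t ∈ J, cs.simple s = x * cs.simple t * x⁻¹}

/-- The product `u 0 * u 1 * ⋯ * u (n-1)`. -/
def pr (u : ℕ → W) (n : ℕ) : W := ((List.range n).map u).prod

/-- Lusztig's set `S(J, ε)` (2.3): sequences `(J_n, J'_n, u_n)` with
`J = J_0 ⊇ J_1 ⊇ ⋯`, `ε(J_n) = ε(J_{n-1}) ∩ Ad(u_0⋯u_{n-1})J_{n-1}` (n ≥ 1),
`J'_0 = ε(J) = J'`, `J'_n = J_{n-1} ∩ Ad(u_0⋯u_{n-1})⁻¹ε(J_{n-1})` (n ≥ 1),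
`u_n ∈ W_{J_{n-1}}` (n ≥ 1), `u_n ∈ {}^{J'_n}W ∩ W^{J_n}` (n ≥ 0).
Here `ε` is encoded by its restriction `f : B ≃ B` to the simple reflections. -/
structure SSeq (cs : CoxeterSystem M W) (f : B ≃ B) (J : Set B) where
  Jn : ℕ → Set B
  J'n : ℕ → Set B
  u : ℕ → W
  hJ0 : Jn 0 = J
  hJ'0 : J'n 0 = f '' J
  hmono : ∀ n, Jn (n + 1) ⊆ Jn n
  hb : ∀ n, f '' Jn (n + 1) = (f '' Jn n) ∩ AdSet cs (pr u (n + 1)) (Jn n)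
  hc : ∀ n, J'n (n + 1) = Jn n ∩ AdSet cs (pr u (n + 1))⁻¹ (f '' Jn n)
  hd : ∀ n, u (n + 1) ∈ WP cs (Jn n)
  he : ∀ n, IsMinL cs (J'n n) (u n) ∧ IsMinR cs (Jn n) (u n)

/-- Lusztig's set `T(J, ε)` (2.2): sequences `(J_n, w_n)` with
`J = J_0 ⊇ J_1 ⊇ ⋯`, `J_n = J_{n-1} ∩ ε⁻¹(Ad(w_{n-1})J_{n-1})` (n ≥ 1),
`w_n ∈ {}^{ε(J_n)}W^{J_n}` (n ≥ 0), `w_n ∈ W_{ε(J_n)} w_{n-1} W_{J_{n-1}}` (n ≥ 1). -/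
structure TSeq (cs : CoxeterSystem M W) (f : B ≃ B) (J : Set B) where
  Jn : ℕ → Set B
  w : ℕ → W
  hJ0 : Jn 0 = J
  hmono : ∀ n, Jn (n + 1) ⊆ Jn n
  hb : ∀ n, Jn (n + 1) = Jn n ∩ f.symm '' AdSet cs (w n) (Jn n)
  hc : ∀ n, IsMinDC cs (f '' Jn n) (Jn n) (w n)
  hd : ∀ n, ∃ a ∈ WP cs (f '' Jn (n + 1)), ∃ b ∈ WP cs (Jn n), w (n + 1) = a * w n * b


section Machinery

open CoxeterSystem List

variable (cs : CoxeterSystem M W)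

local prefix:100 "s" => cs.simple
local prefix:100 "π" => cs.wordProd
local prefix:100 "ℓ" => cs.length

attribute [local instance] Classical.propDecidable

/-! ### The sign permutation representation and strong exchange -/

noncomputable def sigmaFun (i : B) : W × ℤˣ → W × ℤˣ :=
  fun p => (s i * p.1 * s i, if p.1 = s i then -p.2 else p.2)

lemma sigmaFun_invol (i : B) : Function.Involutive (sigmaFun cs i) := by
  rintro ⟨t, ε⟩
  have h1 : s i * (s i * t * s i) * s i = t := by
    simp [mul_assoc, cs.simple_mul_simple_cancel_left, cs.simple_mul_simple_self]
  by_cases h : t = s i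
  · subst h
    simp [sigmaFun, cs.simple_mul_simple_self]
  · have h2 : s i * t * s i ≠ s i := fun hc => h (by
      calc t = s i * (s i * t * s i) * s i := h1.symm
        _ = s i * s i * s i := by rw [hc]
        _ = s i := cs.simple_mul_simple_cancel_right i)
    simp [sigmaFun, h, h2, h1]

noncomputable def sigma (i : B) : Equiv.Perm (W × ℤˣ) := (sigmaFun_invol cs i).toPerm

lemma sigma_apply (i : B) (t : W) (ε : ℤˣ) :
    sigma cs i (t, ε) = (s i * t * s i, if t = s i then -ε else ε) := rfl

lemma prod_sigma (ω : List B) (t : W) (ε : ℤˣ) :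
    ((ω.map (sigma cs)).prod) (t, ε) =
      (π ω * t * (π ω)⁻¹, (-1) ^ ((cs.rightInvSeq ω).countP (· = t)) * ε) := by
  induction ω with
  | nil => simp [rightInvSeq]
  | cons i ω ih =>
    have hris : cs.rightInvSeq (i :: ω) = ((π ω)⁻¹ * (s i) * (π ω)) :: cs.rightInvSeq ω := rfl
    rw [map_cons, prod_cons, Equiv.Perm.mul_apply, ih, sigma_apply, hris, countP_cons]
    have hcond : (π ω * t * (π ω)⁻¹ = s i) ↔ ((π ω)⁻¹ * (s i) * (π ω) = t) := by
      constructor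
      · intro h; rw [← h]; group
      · intro h; rw [← h]; group
    rw [Prod.mk.injEq]
    constructor
    · rw [cs.wordProd_cons]
      group
      simp [cs.inv_simple]
    · by_cases h : π ω * t * (π ω)⁻¹ = s i
      · rw [if_pos h, if_pos (by simpa using (hcond.mp h))]
        rw [pow_succ, mul_neg_one, neg_mul]
      · rw [if_neg h, if_neg (by simpa using (fun hh => h (hcond.mpr hh)))]
        simp



lemma semiconj_pow (i j : B) (r : ℕ) :
    s j * (s i * s j) ^ r = (s j * s i) ^ r * s j :=
  SemiconjBy.pow_right (by simp [SemiconjBy, mul_assoc]) r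

lemma inv_pow_simple (i j : B) (r : ℕ) :
    ((s i * s j) ^ r)⁻¹ = (s j * s i) ^ r := by
  rw [← inv_pow, mul_inv_rev, cs.inv_simple, cs.inv_simple]

lemma rho_formula (i j : B) (q : ℕ) :
    (π (alternatingWord i j q))⁻¹ * s (if Even q then j else i) * π (alternatingWord i j q)
      = (s j * s i) ^ q * s j := by
  rw [cs.prod_alternatingWord_eq_mul_pow]
  rcases Nat.even_or_odd q with he | ho
  · obtain ⟨r, rfl⟩ := he
    rw [if_pos ⟨r, rfl⟩, if_pos ⟨r, rfl⟩, one_mul]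
    have hdiv : (r + r) / 2 = r := by omega
    rw [hdiv]
    calc ((s i * s j) ^ r)⁻¹ * s j * ((s i * s j) ^ r)
        = (s j * s i) ^ r * (s j * (s i * s j) ^ r) := by
          rw [inv_pow_simple, mul_assoc]
      _ = (s j * s i) ^ r * ((s j * s i) ^ r * s j) := by rw [semiconj_pow]
      _ = (s j * s i) ^ (r + r) * s j := by rw [← mul_assoc, ← pow_add]
  · obtain ⟨r, rfl⟩ := ho
    have hne : ¬ Even (2 * r + 1) := by simp [Nat.even_add_one, Nat.even_mul]
    rw [if_neg hne, if_neg hne]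
    have hdiv : (2 * r + 1) / 2 = r := by omega
    rw [hdiv]
    calc (s j * (s i * s j) ^ r)⁻¹ * s i * (s j * (s i * s j) ^ r)
        = (s j * s i) ^ r * (s j * (s i * (s j * (s i * s j) ^ r))) := by
          rw [mul_inv_rev, inv_pow_simple, cs.inv_simple]
          simp only [mul_assoc]
      _ = (s j * s i) ^ r * (s j * (s i * s j) ^ (r + 1)) := by
          rw [show s i * (s j * (s i * s j) ^ r) = (s i * s j) ^ (r + 1) by
            rw [← mul_assoc, ← pow_succ']]
      _ = (s j * s i) ^ r * ((s j * s i) ^ (r + 1) * s j) := by rw [semiconj_pow]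
      _ = (s j * s i) ^ (2 * r + 1) * s j := by
          rw [← mul_assoc, ← pow_add, show r + (r + 1) = 2 * r + 1 by omega]

lemma alt_drop (i j : B) : ∀ (d n : ℕ), d ≤ n →
    (alternatingWord i j n).drop d = alternatingWord i j (n - d) := by
  intro d
  induction d with
  | zero => simp
  | succ d ih =>
    intro n hd
    obtain ⟨n, rfl⟩ : ∃ n', n = n' + 1 := ⟨n - 1, by omega⟩
    rw [alternatingWord_succ', List.drop_succ_cons, ih n (by omega)]
    congr 1
    omega

lemma alt_getElem? (i j : B) (n k : ℕ) (h : k < n) :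
    (alternatingWord i j n)[k]? = some (if Even (n - k - 1) then j else i) := by
  have h1 : (alternatingWord i j n)[k]? = ((alternatingWord i j n).drop k)[0]? := by
    rw [List.getElem?_drop]
    simp
  rw [h1, alt_drop i j k n h.le]
  obtain ⟨m, hm⟩ : ∃ m, n - k = m + 1 := ⟨n - k - 1, by omega⟩
  rw [hm, alternatingWord_succ']
  simp [show n - k - 1 = m by omega]

lemma ris_alt (i j : B) (n k : ℕ) (h : k < n) :
    (cs.rightInvSeq (alternatingWord i j n)).getD k 1 = (s j * s i) ^ (n - k - 1) * s j := by
  rw [cs.getD_rightInvSeq, alt_drop i j (k + 1) n (by omega)]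
  rw [alt_getElem? i j n k h]
  have := rho_formula cs i j (n - k - 1)
  simpa [show n - (k + 1) = n - k - 1 by omega] using this



lemma pi_alt_even (i j : B) (m : ℕ) : π (alternatingWord i j (2 * m)) = (s i * s j) ^ m := by
  rw [cs.prod_alternatingWord_eq_mul_pow, if_pos ⟨m, by omega⟩, one_mul]
  congr 1
  omega

lemma alt_two_mul_succ (i j : B) (m : ℕ) :
    alternatingWord i j (2 * (m + 1)) = i :: j :: alternatingWord i j (2 * m) := by
  have h1 : 2 * (m + 1) = (2 * m + 1) + 1 := by omega
  rw [h1, alternatingWord_succ', alternatingWord_succ']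
  have h2 : ¬ Even (2 * m + 1) := by simp [Nat.even_add_one, Nat.even_mul]
  have h3 : Even (2 * m) := ⟨m, by omega⟩
  rw [if_neg h2, if_pos h3]

lemma prod_map_sigma_alt (i j : B) (m : ℕ) :
    ((alternatingWord i j (2 * m)).map (sigma cs)).prod = (sigma cs i * sigma cs j) ^ m := by
  induction m with
  | zero => simp [show 2 * 0 = 0 by omega, alternatingWord]
  | succ m ih =>
    rw [alt_two_mul_succ, map_cons, map_cons, prod_cons, prod_cons, ih, pow_succ']
    rw [mul_assoc]

lemma braid (i j : B) : (sigma cs i * sigma cs j) ^ (M i j) = 1 := by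
  by_cases hM : M i j = 0
  · rw [hM, pow_zero]
  set m := M i j with hm
  apply Equiv.ext
  rintro ⟨t, ε⟩
  rw [Equiv.Perm.one_apply, ← prod_map_sigma_alt, prod_sigma]
  set ω := alternatingWord i j (2 * m) with hω
  have hπ : π ω = 1 := by
    rw [hω, pi_alt_even, hm]
    exact cs.simple_mul_simple_pow i j
  have hlen : ω.length = 2 * m := by rw [hω, length_alternatingWord]
  have hrislen : (cs.rightInvSeq ω).length = 2 * m := by
    rw [cs.length_rightInvSeq, hlen]
  have hcount : Even ((cs.rightInvSeq ω).countP (· = t)) := by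
    have htake : (cs.rightInvSeq ω).take m = cs.rightInvSeq (alternatingWord i j m) := by
      apply List.ext_getElem
      · simp only [List.length_take, hrislen, cs.length_rightInvSeq, length_alternatingWord]
        omega
      · intro k h1 h2
        have hk : k < m := by
          simp only [List.length_take, hrislen, lt_min_iff] at h1
          exact h1.1
        rw [List.getElem_take]
        rw [← List.getD_eq_getElem (cs.rightInvSeq ω) 1 (by rw [hrislen]; omega),
          ← List.getD_eq_getElem (cs.rightInvSeq (alternatingWord i j m)) 1
            (by rw [cs.length_rightInvSeq, length_alternatingWord]; omega)]
        rw [hω, ris_alt cs i j (2 * m) k (by omega), ris_alt cs i j m k hk]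
        rw [show 2 * m - k - 1 = (m - k - 1) + m by omega, pow_add, mul_assoc]
        rw [show (s j * s i) ^ m = 1 from hm ▸ cs.simple_mul_simple_pow' i j, one_mul]
    have hdrop : (cs.rightInvSeq ω).drop m = cs.rightInvSeq (alternatingWord i j m) := by
      rw [← cs.rightInvSeq_drop, hω, alt_drop i j m (2 * m) (by omega),
        show 2 * m - m = m by omega]
    have hsplit : (cs.rightInvSeq ω).countP (· = t) =
        ((cs.rightInvSeq ω).take m).countP (· = t)
          + ((cs.rightInvSeq ω).drop m).countP (· = t) := by
      rw [← List.countP_append, List.take_append_drop]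
    rw [hsplit, htake, hdrop]
    exact ⟨_, rfl⟩
  rw [Prod.mk.injEq]
  constructor
  · rw [hπ]
    group
  · rw [hcount.neg_one_pow, one_mul]

noncomputable def perm : W →* Equiv.Perm (W × ℤˣ) :=
  cs.lift ⟨fun i => sigma cs i, fun i j => braid cs i j⟩

lemma perm_simple (i : B) : perm cs (s i) = sigma cs i :=
  cs.lift_apply_simple _ i

lemma perm_wordProd (ω : List B) : perm cs (π ω) = (ω.map (sigma cs)).prod := by
  induction ω with
  | nil => simp [perm]
  | cons i ω ih => rw [cs.wordProd_cons, map_mul, ih, map_cons, prod_cons, perm_simple]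

noncomputable def eta (w t : W) : ℤˣ := ((perm cs w) (t, 1)).2

lemma eta_count {w : W} {ω : List B} (hω : π ω = w) (t : W) :
    eta cs w t = (-1) ^ ((cs.rightInvSeq ω).countP (· = t)) := by
  unfold eta
  rw [← hω, perm_wordProd, prod_sigma, mul_one]

lemma perm_apply (w t : W) (ε : ℤˣ) :
    perm cs w (t, ε) = (w * t * w⁻¹, eta cs w t * ε) := by
  obtain ⟨ω, hω⟩ := cs.wordProd_surjective w
  subst hω
  rw [perm_wordProd, prod_sigma, eta_count cs rfl]

lemma eta_mem_ris {w t : W} {ω : List B} (hω : π ω = w) (h : eta cs w t = -1) :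
    t ∈ cs.rightInvSeq ω := by
  by_contra hmem
  have h0 : (cs.rightInvSeq ω).countP (· = t) = 0 := by
    apply List.countP_eq_zero.mpr
    intro x hx
    simp only [decide_eq_true_eq]
    rintro rfl
    exact hmem hx
  rw [eta_count cs hω, h0, pow_zero] at h
  exact absurd h (by decide)

lemma eta_reflection {t : W} (ht : cs.IsReflection t) : eta cs t t = -1 := by
  obtain ⟨u, i, rfl⟩ := ht
  have h0 : perm cs u⁻¹ (u * s i * u⁻¹, 1) = (s i, eta cs u⁻¹ (u * s i * u⁻¹)) := by
    rw [perm_apply]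
    congr 1
    · group
    · rw [mul_one]
  have hprod : eta cs u (s i) * eta cs u⁻¹ (u * s i * u⁻¹) = 1 := by
    have h1 : perm cs u (perm cs u⁻¹ (u * s i * u⁻¹, 1)) = (u * s i * u⁻¹, 1) := by
      rw [← Equiv.Perm.mul_apply, ← map_mul, mul_inv_cancel, map_one, Equiv.Perm.one_apply]
    rw [h0, perm_apply] at h1
    have := congrArg Prod.snd h1
    simpa using this
  have hmid : perm cs (s i) (s i, eta cs u⁻¹ (u * s i * u⁻¹)) =
      (s i, -(eta cs u⁻¹ (u * s i * u⁻¹))) := by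
    rw [perm_simple, sigma_apply, if_pos rfl, cs.simple_mul_simple_cancel_right]
  have hfin : perm cs (u * s i * u⁻¹) (u * s i * u⁻¹, 1) =
      (u * s i * u⁻¹, -(eta cs u (s i) * eta cs u⁻¹ (u * s i * u⁻¹))) := by
    rw [map_mul, map_mul, Equiv.Perm.mul_apply, Equiv.Perm.mul_apply, h0, hmid, perm_apply]
    congr 1
    rw [mul_neg]
  unfold eta
  rw [hfin, hprod]

lemma eta_mul_reflection (w t : W) (ht : cs.IsReflection t) :
    eta cs (w * t) t = - eta cs w t := by
  have h1 : perm cs (w * t) (t, 1) = perm cs w (perm cs t (t, 1)) := by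
    rw [← Equiv.Perm.mul_apply, ← map_mul]
  have h2 : perm cs t (t, 1) = (t, -1) := by
    rw [perm_apply]
    congr 1
    · rw [mul_assoc, mul_inv_cancel, mul_one]
    · rw [mul_one, eta_reflection cs ht]
  unfold eta
  rw [h1, h2, perm_apply]
  simp only [mul_neg, mul_one, neg_inj]
  rfl

lemma eta_neg_of_lt {w t : W} (ht : cs.IsReflection t) (hl : ℓ (w * t) < ℓ w) :
    eta cs w t = -1 := by
  rcases Int.units_eq_one_or (eta cs w t) with h | h
  · exfalso
    have h2 : eta cs (w * t) t = -1 := by rw [eta_mul_reflection cs w t ht, h]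
    obtain ⟨ω, hred, hw⟩ := cs.exists_reduced_word' (w * t)
    have hmem := eta_mem_ris cs hw.symm h2
    have hinv := cs.isRightInversion_of_mem_rightInvSeq hred hmem
    rw [← hw] at hinv
    have h3 := hinv.2
    rw [mul_assoc, ht.mul_self, mul_one] at h3
    omega
  · exact h

theorem strong_exchange_right {w t : W} {ω : List B} (ht : cs.IsReflection t)
    (hl : ℓ (w * t) < ℓ w) (hω : π ω = w) :
    ∃ j < ω.length, w * t = π (ω.eraseIdx j) := by
  have hmem := eta_mem_ris cs hω (eta_neg_of_lt cs ht hl)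
  obtain ⟨k, hk, hgd⟩ := List.mem_iff_getElem.mp hmem
  refine ⟨k, by simpa using hk, ?_⟩
  rw [← hω, ← cs.wordProd_mul_getD_rightInvSeq ω k, List.getD_eq_getElem _ _ hk, hgd]

theorem strong_exchange_left {w t : W} {ω : List B} (ht : cs.IsReflection t)
    (hl : ℓ (t * w) < ℓ w) (hω : π ω = w) :
    ∃ j < ω.length, t * w = π (ω.eraseIdx j) := by
  have h1 : π ω.reverse = w⁻¹ := by rw [cs.wordProd_reverse, hω]
  have hl' : ℓ (w⁻¹ * t) < ℓ (w⁻¹) := by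
    have he : w⁻¹ * t = (t * w)⁻¹ := by rw [mul_inv_rev, ht.inv]
    rw [he, cs.length_inv, cs.length_inv]
    exact hl
  have hmem := eta_mem_ris cs h1 (eta_neg_of_lt cs ht hl')
  rw [cs.rightInvSeq_reverse, List.mem_reverse] at hmem
  obtain ⟨k, hk, hgd⟩ := List.mem_iff_getElem.mp hmem
  refine ⟨k, by simpa using hk, ?_⟩
  rw [← hω, ← cs.getD_leftInvSeq_mul_wordProd ω k, List.getD_eq_getElem _ _ hk, hgd]

/-! ### Deletion and parabolic subgroups -/

theorem deletion {ω : List B} (h : ℓ (π ω) < ω.length) :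
    ∃ ω', ω' <+ ω ∧ ω'.length + 2 = ω.length ∧ π ω' = π ω := by
  have hex : ∃ k, ¬ cs.IsReduced (ω.take (k + 1)) := by
    refine ⟨ω.length - 1, ?_⟩
    rw [show ω.length - 1 + 1 = ω.length by omega, List.take_length]
    unfold CoxeterSystem.IsReduced
    omega
  set k := Nat.find hex with hkdef
  have hk : ¬ cs.IsReduced (ω.take (k + 1)) := Nat.find_spec hex
  have hkle : k ≤ ω.length - 1 := Nat.find_min' hex (by
    rw [show ω.length - 1 + 1 = ω.length by omega, List.take_length]
    unfold CoxeterSystem.IsReduced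
    omega)
  have hklen : k < ω.length := by omega
  have hred : cs.IsReduced (ω.take k) := by
    rcases Nat.eq_zero_or_pos k with h0 | h0
    · rw [h0]
      unfold CoxeterSystem.IsReduced
      simp
    · have hmin := Nat.find_min hex (show k - 1 < k by omega)
      rw [show k - 1 + 1 = k by omega] at hmin
      exact not_not.mp hmin
  have hlen_take : (ω.take k).length = k := by rw [List.length_take]; omega
  have hν : ℓ (π (ω.take k)) = k := by
    have h1 := hred
    unfold CoxeterSystem.IsReduced at h1
    omega
  have htake : ω.take (k + 1) = ω.take k ++ [ω[k]] := by
    rw [List.take_succ, List.getElem?_eq_getElem hklen]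
    rfl
  have hlt : ℓ (π (ω.take k) * s ω[k]) < ℓ (π (ω.take k)) := by
    have h1 : ¬ ℓ (π (ω.take (k + 1))) = (ω.take (k + 1)).length := hk
    have hlen1 : (ω.take (k + 1)).length = k + 1 := by rw [List.length_take]; omega
    rw [hlen1, htake, cs.wordProd_append, cs.wordProd_singleton] at h1
    rcases cs.length_mul_simple (π (ω.take k)) ω[k] with h2 | h2 <;> omega
  obtain ⟨jj, hjj, hjeq⟩ := strong_exchange_right cs (cs.isReflection_simple ω[k]) hlt rfl
  refine ⟨(ω.take k).eraseIdx jj ++ ω.drop (k + 1), ?_, ?_, ?_⟩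
  · have s1 : (ω.take k).eraseIdx jj <+ ω.take (k + 1) := by
      rw [htake]
      exact ((ω.take k).eraseIdx_sublist jj).trans (List.sublist_append_left _ _)
    have s2 := List.Sublist.append s1 (List.Sublist.refl (ω.drop (k + 1)))
    rw [List.take_append_drop] at s2
    exact s2
  · have e1 : ((ω.take k).eraseIdx jj).length + 1 = (ω.take k).length :=
      List.length_eraseIdx_add_one (by omega)
    rw [List.length_append, List.length_drop]
    omega
  · rw [cs.wordProd_append, ← hjeq]
    have : π (ω.take k) * s ω[k] * π (ω.drop (k + 1)) = π (ω.take (k + 1)) * π (ω.drop (k + 1)) := by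
      rw [htake, cs.wordProd_append, cs.wordProd_singleton]
    rw [this, ← cs.wordProd_append, List.take_append_drop]

lemma wordProd_mem_WP {K : Set B} {ω : List B} (h : ∀ i ∈ ω, i ∈ K) : π ω ∈ WP cs K := by
  induction ω with
  | nil => rw [cs.wordProd_nil]; exact one_mem _
  | cons i ω ih =>
    rw [cs.wordProd_cons]
    exact mul_mem (Subgroup.subset_closure ⟨i, h i List.mem_cons_self, rfl⟩)
      (ih fun j hj => h j (List.mem_cons_of_mem _ hj))

lemma exists_word_of_mem_WP {K : Set B} {w : W} (h : w ∈ WP cs K) :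
    ∃ ω : List B, (∀ i ∈ ω, i ∈ K) ∧ π ω = w := by
  induction h using Subgroup.closure_induction with
  | mem x hx =>
    obtain ⟨i, hi, rfl⟩ := hx
    exact ⟨[i], by simpa using hi, cs.wordProd_singleton i⟩
  | one => exact ⟨[], by simp, cs.wordProd_nil⟩
  | mul x y hx hy ihx ihy =>
    obtain ⟨ω₁, h1, e1⟩ := ihx
    obtain ⟨ω₂, h2, e2⟩ := ihy
    exact ⟨ω₁ ++ ω₂, fun i hi => (List.mem_append.mp hi).elim (h1 i) (h2 i),
      by rw [cs.wordProd_append, e1, e2]⟩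
  | inv x hx ihx =>
    obtain ⟨ω₁, h1, e1⟩ := ihx
    exact ⟨ω₁.reverse, fun i hi => h1 i (List.mem_reverse.mp hi),
      by rw [cs.wordProd_reverse, e1]⟩

lemma exists_reduced_word_of_mem_WP {K : Set B} {w : W} (h : w ∈ WP cs K) :
    ∃ ω : List B, cs.IsReduced ω ∧ (∀ i ∈ ω, i ∈ K) ∧ π ω = w := by
  obtain ⟨ω, hK, hw⟩ := exists_word_of_mem_WP cs h
  have main : ∀ n (ω : List B), ω.length = n → (∀ i ∈ ω, i ∈ K) →
      ∃ ω', cs.IsReduced ω' ∧ (∀ i ∈ ω', i ∈ K) ∧ π ω' = π ω := by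
    intro n
    induction n using Nat.strong_induction_on with
    | _ n ih =>
      intro ω hn hK
      rcases eq_or_lt_of_le (cs.length_wordProd_le ω) with heq | hlt
      · exact ⟨ω, heq, hK, rfl⟩
      · obtain ⟨ω', hsub, hlen, hprod⟩ := deletion cs hlt
        obtain ⟨ω'', a, b, c⟩ := ih ω'.length (by omega) ω' rfl
          (fun i hi => hK i (hsub.subset hi))
        exact ⟨ω'', a, b, by rw [c, hprod]⟩
  obtain ⟨ω', a, b, c⟩ := main ω.length ω rfl hK
  exact ⟨ω', a, b, by rw [c, hw]⟩

lemma length_eq_of_mem_WP {K : Set B} {w : W} (h : w ∈ WP cs K) :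
    ∃ ω : List B, ω.length = ℓ w ∧ (∀ i ∈ ω, i ∈ K) ∧ π ω = w := by
  obtain ⟨ω, hred, hK, hw⟩ := exists_reduced_word_of_mem_WP cs h
  exact ⟨ω, by have := hred; unfold CoxeterSystem.IsReduced at this; rw [← hw]; omega, hK, hw⟩

/-- Decomposition of a nontrivial element of `W_K` as `s i * a'` with length decreasing. -/
lemma cons_decomp {K : Set B} {a : W} (ha : a ∈ WP cs K) (hne : a ≠ 1) :
    ∃ i ∈ K, ∃ a' ∈ WP cs K, a = s i * a' ∧ ℓ a' + 1 = ℓ a := by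
  obtain ⟨ω, hlen, hK, hw⟩ := length_eq_of_mem_WP cs ha
  match ω, hw with
  | [], hw => exact absurd (hw.symm.trans (cs.wordProd_nil)) hne
  | i :: ω', hw =>
    refine ⟨i, hK i List.mem_cons_self, π ω', wordProd_mem_WP cs
      (fun j hj => hK j (List.mem_cons_of_mem _ hj)), by rw [← hw, cs.wordProd_cons], ?_⟩
    have h1 : ℓ (π ω') ≤ ω'.length := cs.length_wordProd_le ω'
    have h2 : ℓ (π (i :: ω')) ≤ ℓ (s i) + ℓ (π ω') := by
      rw [cs.wordProd_cons]
      exact cs.length_mul_le _ _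
    rw [cs.length_simple] at h2
    rw [hw] at *
    simp only [List.length_cons] at hlen
    omega

/-! ### Coset minimality theory -/

lemma simple_mem_WP {K : Set B} {i : B} (hi : i ∈ K) : s i ∈ WP cs K :=
  Subgroup.subset_closure ⟨i, hi, rfl⟩

lemma simple_ne_one (i : B) : s i ≠ 1 := by
  intro h
  have h1 := cs.length_simple i
  rw [h, cs.length_one] at h1
  omega

lemma WP_mono {K K' : Set B} (h : K ⊆ K') : WP cs K ≤ WP cs K' :=
  Subgroup.closure_mono (Set.image_mono h)

lemma min_coset_add {K : Set B} {u : W} (hu : ∀ a ∈ WP cs K, ℓ u ≤ ℓ (a * u)) :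
    ∀ a ∈ WP cs K, ℓ (a * u) = ℓ a + ℓ u := by
  have main : ∀ n, ∀ a ∈ WP cs K, ℓ a ≤ n → ℓ (a * u) = ℓ a + ℓ u := by
    intro n
    induction n with
    | zero =>
      intro a ha hn
      have h1 : a = 1 := cs.length_eq_zero_iff.mp (by omega)
      subst h1
      simp
    | succ n ih =>
      intro a ha hn
      rcases Nat.lt_or_ge (ℓ a) (n + 1) with hlt | hge
      · exact ih a ha (by omega)
      have hane : a ≠ 1 := by
        intro h
        rw [h, cs.length_one] at hge
        omega
      obtain ⟨i, hiK, a', ha', haeq, hlena⟩ := cons_decomp cs ha hane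
      have iha' := ih a' ha' (by omega)
      obtain ⟨ωa, hωalen, hωaK, hωa⟩ := length_eq_of_mem_WP cs ha'
      obtain ⟨ωu, hωured, hωu⟩ := cs.exists_reduced_word' u
      have hword : π (ωa ++ ωu) = a' * u := by rw [cs.wordProd_append, hωa, ← hωu]
      have hωulen : ωu.length = ℓ u := by
        have h1 := hωured
        unfold CoxeterSystem.IsReduced at h1
        rw [hωu]
        omega
      have hnd : ¬ cs.IsLeftDescent (a' * u) i := by
        intro hdesc
        obtain ⟨jj, hjj, hjeq⟩ :=
          strong_exchange_left cs (cs.isReflection_simple i) hdesc hword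
        rcases Nat.lt_or_ge jj ωa.length with hcase | hcase
        · rw [List.eraseIdx_append_of_lt_length hcase, cs.wordProd_append, ← hωu] at hjeq
          have e1 : a * u = π (ωa.eraseIdx jj) * u := by
            rw [haeq, mul_assoc]
            exact hjeq
          have e2 : a = π (ωa.eraseIdx jj) := mul_right_cancel e1
          have e3 : ℓ a ≤ (ωa.eraseIdx jj).length := by
            rw [e2]
            exact cs.length_wordProd_le _
          have e4 := List.length_eraseIdx_add_one hcase
          omega
        · rw [List.eraseIdx_append_of_length_le hcase, cs.wordProd_append, hωa] at hjeq
          have e1 : (a'⁻¹ * s i * a') * u = π (ωu.eraseIdx (jj - ωa.length)) := by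
            calc (a'⁻¹ * s i * a') * u = a'⁻¹ * (s i * (a' * u)) := by group
            _ = a'⁻¹ * (a' * π (ωu.eraseIdx (jj - ωa.length))) := by rw [hjeq]
            _ = π (ωu.eraseIdx (jj - ωa.length)) := by group
          have hmem : a'⁻¹ * s i * a' ∈ WP cs K :=
            mul_mem (mul_mem (inv_mem ha') (simple_mem_WP cs hiK)) ha'
          have hle := hu _ hmem
          have e2 : ℓ ((a'⁻¹ * s i * a') * u) ≤ (ωu.eraseIdx (jj - ωa.length)).length := by
            rw [e1]
            exact cs.length_wordProd_le _
          have e3 : jj - ωa.length < ωu.length := by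
            have := hjj
            rw [List.length_append] at this
            omega
          have e4 := List.length_eraseIdx_add_one e3
          omega
      have e5 : ℓ (a * u) = ℓ (a' * u) + 1 := by
        rw [haeq, mul_assoc]
        exact cs.not_isLeftDescent_iff.mp hnd
      omega
  intro a ha
  exact main (ℓ a) a ha le_rfl

lemma exists_min_in_coset (K : Set B) (u : W) :
    ∃ a₀ ∈ WP cs K, ∀ a ∈ WP cs K, ℓ (a₀ * u) ≤ ℓ (a * u) := by
  have hS : ((fun a : W => ℓ (a * u)) '' {a | a ∈ WP cs K}).Nonempty :=
    ⟨ℓ ((1 : W) * u), ⟨1, by simp only [Set.mem_setOf_eq]; exact one_mem _, rfl⟩⟩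
  obtain ⟨a₀, ha₀, heq⟩ := Nat.sInf_mem hS
  simp only at heq
  refine ⟨a₀, ha₀, fun a ha => ?_⟩
  rw [heq]
  exact Nat.sInf_le ⟨a, ha, rfl⟩

lemma lred_add {K : Set B} {u : W} (hL : ∀ i ∈ K, ¬ cs.IsLeftDescent u i) :
    ∀ a ∈ WP cs K, ℓ (a * u) = ℓ a + ℓ u := by
  obtain ⟨a₀, ha₀, hmin⟩ := exists_min_in_coset cs K u
  have hvmin : ∀ b ∈ WP cs K, ℓ (a₀ * u) ≤ ℓ (b * (a₀ * u)) := by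
    intro b hb
    have h1 : b * (a₀ * u) = (b * a₀) * u := by rw [mul_assoc]
    rw [h1]
    exact hmin _ (mul_mem hb ha₀)
  have hadd := min_coset_add cs hvmin
  have hu_eq : u = a₀⁻¹ * (a₀ * u) := by group
  have h1 : a₀⁻¹ = 1 := by
    by_contra hne
    obtain ⟨i, hiK, a₁, ha₁, haeq, hlen⟩ := cons_decomp cs (inv_mem ha₀) hne
    have h2 : s i * u = a₁ * (a₀ * u) := by
      have e : u = s i * (a₁ * (a₀ * u)) := by
        conv_lhs => rw [hu_eq, haeq]
        rw [mul_assoc]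
      conv_lhs => rw [e]
      rw [cs.simple_mul_simple_cancel_left]
    have h3 : ℓ (s i * u) = ℓ a₁ + ℓ (a₀ * u) := by
      rw [h2]
      exact hadd a₁ ha₁
    have h4 : ℓ u = ℓ a₀⁻¹ + ℓ (a₀ * u) := by
      nth_rewrite 1 [hu_eq]
      exact hadd _ (inv_mem ha₀)
    exact hL i hiK (by unfold CoxeterSystem.IsLeftDescent; omega)
  have h2 : u = a₀ * u := by
    nth_rewrite 1 [hu_eq]
    rw [h1, one_mul]
  intro a ha
  rw [h2]
  exact hadd a ha

lemma rred_add {K : Set B} {u : W} (hR : ∀ i ∈ K, ¬ cs.IsRightDescent u i) :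
    ∀ b ∈ WP cs K, ℓ (u * b) = ℓ u + ℓ b := by
  intro b hb
  have hL : ∀ i ∈ K, ¬ cs.IsLeftDescent u⁻¹ i := fun i hi h =>
    hR i hi (cs.isLeftDescent_inv_iff.mp h)
  have h1 : ℓ ((u * b)⁻¹) = ℓ b⁻¹ + ℓ u⁻¹ := by
    rw [mul_inv_rev]
    exact lred_add cs hL b⁻¹ (inv_mem hb)
  rw [cs.length_inv, cs.length_inv, cs.length_inv] at h1
  omega

lemma isMinL_iff {K : Set B} {w : W} :
    IsMinL cs K w ↔ ∀ i ∈ K, ¬ cs.IsLeftDescent w i := by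
  constructor
  · intro h i hi hdesc
    have h1 := h (s i) (simple_mem_WP cs hi) (fun hc =>
      simple_ne_one cs i (mul_right_cancel (b := w) (by rw [one_mul]; exact hc)))
    unfold CoxeterSystem.IsLeftDescent at hdesc
    omega
  · intro h a ha hne
    have h1 := lred_add cs h a ha
    have h2 : ℓ a ≠ 0 := fun h0 => hne (by rw [cs.length_eq_zero_iff.mp h0, one_mul])
    omega

lemma isMinR_iff {K : Set B} {w : W} :
    IsMinR cs K w ↔ ∀ i ∈ K, ¬ cs.IsRightDescent w i := by
  constructor
  · intro h i hi hdesc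
    have h1 := h (s i) (simple_mem_WP cs hi) (fun hc =>
      simple_ne_one cs i (mul_left_cancel (a := w) (by rw [mul_one]; exact hc)))
    unfold CoxeterSystem.IsRightDescent at hdesc
    omega
  · intro h b hb hne
    have h1 := rred_add cs h b hb
    have h2 : ℓ b ≠ 0 := fun h0 => hne (by rw [cs.length_eq_zero_iff.mp h0, mul_one])
    omega

lemma min_double_coset {K J : Set B} {w : W}
    (hL : ∀ i ∈ K, ¬ cs.IsLeftDescent w i) (hR : ∀ i ∈ J, ¬ cs.IsRightDescent w i) :
    IsMinDC cs K J w := by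
  have main : ∀ n, ∀ a ∈ WP cs K, ∀ b ∈ WP cs J, ℓ a ≤ n →
      ℓ (a * w * b) ≤ ℓ w → a * w * b = w := by
    intro n
    induction n using Nat.strong_induction_on with
    | _ n ih =>
      intro a ha b hb hla hlen
      rcases Nat.eq_zero_or_pos (ℓ a) with h0 | h0
      · have ha1 : a = 1 := cs.length_eq_zero_iff.mp h0
        subst ha1
        rw [one_mul] at hlen ⊢
        have h1 : ℓ (w * b) = ℓ w + ℓ b := rred_add cs hR b hb
        have hb1 : b = 1 := cs.length_eq_zero_iff.mp (by omega)
        rw [hb1, mul_one]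
      · have hane : a ≠ 1 := fun h => by rw [h, cs.length_one] at h0; omega
        have h1 : ℓ (w * b) = ℓ w + ℓ b := rred_add cs hR b hb
        have h2 : ℓ (w * b) ≤ ℓ a + ℓ (a * w * b) := by
          have e : w * b = a⁻¹ * (a * w * b) := by group
          rw [e, ← cs.length_inv a]
          exact cs.length_mul_le _ _
        have h3 : ℓ (a * w) = ℓ a + ℓ w := lred_add cs hL a ha
        have h4 : ℓ (a * w) ≤ ℓ (a * w * b) + ℓ b := by
          have e2 : ℓ ((a * w * b) * b⁻¹) ≤ ℓ (a * w * b) + ℓ b⁻¹ := cs.length_mul_le _ _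
          rw [cs.length_inv] at e2
          have e3 : (a * w * b) * b⁻¹ = a * w := by group
          rw [e3] at e2
          exact e2
        have hab : ℓ a = ℓ b := by omega
        have hww : ℓ (a * w * b) = ℓ w := by omega
        rcases Nat.eq_zero_or_pos (ℓ w) with hw0 | hw0
        · exact (cs.length_eq_zero_iff.mp (by omega)).trans
            (cs.length_eq_zero_iff.mp hw0).symm
        obtain ⟨ω₁, hred1, hωw'⟩ := cs.exists_reduced_word' (a * w * b)
        obtain ⟨ω₂, hω₂len, hω₂J, hω₂⟩ := length_eq_of_mem_WP cs (inv_mem hb)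
        have hω₁len : ω₁.length = ℓ w := by
          have e := hred1
          unfold CoxeterSystem.IsReduced at e
          rw [← hωw'] at e
          omega
        have hword : π (ω₁ ++ ω₂) = a * w := by
          rw [cs.wordProd_append, ← hωw', hω₂]
          group
        obtain ⟨i, hiK, a', ha', haeq, halen⟩ := cons_decomp cs ha hane
        have hsia : s i * (a * w) = a' * w := by
          rw [haeq]
          simp [mul_assoc, cs.simple_mul_simple_cancel_left]
        have hdesc : ℓ (s i * (a * w)) < ℓ (a * w) := by
          have e2 : ℓ (a' * w) = ℓ a' + ℓ w := lred_add cs hL a' ha'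
          rw [hsia, e2, h3]
          omega
        obtain ⟨jj, hjj, hjeq⟩ :=
          strong_exchange_left cs (cs.isReflection_simple i) hdesc hword
        rcases Nat.lt_or_ge jj ω₁.length with hcase | hcase
        · rw [List.eraseIdx_append_of_lt_length hcase, cs.wordProd_append, hω₂] at hjeq
          have e3 : a' * w * b = π (ω₁.eraseIdx jj) := by
            calc a' * w * b = (s i * (a * w)) * b := by rw [hsia]
            _ = (π (ω₁.eraseIdx jj) * b⁻¹) * b := by rw [hjeq]
            _ = π (ω₁.eraseIdx jj) := by group
          have e4 : ℓ (a' * w * b) ≤ (ω₁.eraseIdx jj).length := by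
            rw [e3]
            exact cs.length_wordProd_le _
          have e5 := List.length_eraseIdx_add_one hcase
          have e6 := ih (ℓ a') (by omega) a' ha' b hb le_rfl (by omega)
          rw [e6] at e4
          omega
        · rw [List.eraseIdx_append_of_length_le hcase, cs.wordProd_append, ← hωw'] at hjeq
          have hb₂mem : (π (ω₂.eraseIdx (jj - ω₁.length)))⁻¹ ∈ WP cs J :=
            inv_mem (wordProd_mem_WP cs
              (fun x hx => hω₂J x ((ω₂.eraseIdx_sublist _).subset hx)))
          have e3 : a' * w * (π (ω₂.eraseIdx (jj - ω₁.length)))⁻¹ = a * w * b := by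
            calc a' * w * (π (ω₂.eraseIdx (jj - ω₁.length)))⁻¹
                = (s i * (a * w)) * (π (ω₂.eraseIdx (jj - ω₁.length)))⁻¹ := by rw [hsia]
            _ = ((a * w * b) * π (ω₂.eraseIdx (jj - ω₁.length)))
                  * (π (ω₂.eraseIdx (jj - ω₁.length)))⁻¹ := by rw [hjeq]
            _ = a * w * b := by group
          have e6 := ih (ℓ a') (by omega) a' ha' _ hb₂mem le_rfl (by rw [e3]; omega)
          rw [e6] at e3
          exact e3.symm
  intro a ha b hb hne
  by_contra hlt
  rw [not_lt] at hlt
  exact hne (main (ℓ a) a ha b hb le_rfl hlt)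

lemma lred_of_isMinDC {K J : Set B} {w : W} (h : IsMinDC cs K J w) :
    ∀ i ∈ K, ¬ cs.IsLeftDescent w i := by
  intro i hi hdesc
  have h1 := h (s i) (simple_mem_WP cs hi) 1 (one_mem _) (by
    rw [mul_one]
    intro hc
    exact simple_ne_one cs i (mul_right_cancel (b := w) (by rw [one_mul]; exact hc)))
  rw [mul_one] at h1
  unfold CoxeterSystem.IsLeftDescent at hdesc
  omega

lemma rred_of_isMinDC {K J : Set B} {w : W} (h : IsMinDC cs K J w) :
    ∀ i ∈ J, ¬ cs.IsRightDescent w i := by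
  intro i hi hdesc
  have h1 := h 1 (one_mem _) (s i) (simple_mem_WP cs hi) (by
    rw [one_mul]
    intro hc
    exact simple_ne_one cs i (mul_left_cancel (a := w) (by rw [mul_one]; exact hc)))
  rw [one_mul] at h1
  unfold CoxeterSystem.IsRightDescent at hdesc
  omega

/-! ### The bijection -/

lemma pr_zero (u : ℕ → W) : pr u 0 = 1 := rfl

lemma pr_succ (u : ℕ → W) (n : ℕ) : pr u (n + 1) = pr u n * u n := by
  unfold pr
  rw [List.range_succ, List.map_append, List.prod_append]
  simp

lemma pr_one (u : ℕ → W) : pr u (0 + 1) = u 0 := by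
  rw [pr_succ, pr_zero, one_mul]

variable (f : B ≃ B) (J : Set B)

lemma sseq_red (sq : SSeq cs f J) (n : ℕ) :
    (∀ i ∈ f '' sq.Jn n, ¬ cs.IsLeftDescent (pr sq.u (n + 1)) i) ∧
    (∀ i ∈ sq.Jn n, ¬ cs.IsRightDescent (pr sq.u (n + 1)) i) := by
  induction n with
  | zero =>
    constructor
    · intro i hi
      rw [pr_one]
      apply (isMinL_iff cs).mp (sq.he 0).1
      rw [sq.hJ'0]
      rw [sq.hJ0] at hi
      exact hi
    · intro i hi
      rw [pr_one]
      exact (isMinR_iff cs).mp (sq.he 0).2 i hi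
  | succ n ih =>
    have hw : pr sq.u (n + 1 + 1) = pr sq.u (n + 1) * sq.u (n + 1) := pr_succ _ _
    have hR := ih.2
    have hadd : ∀ x ∈ WP cs (sq.Jn n), ℓ (pr sq.u (n + 1) * x) = ℓ (pr sq.u (n + 1)) + ℓ x :=
      fun x hx => rred_add cs hR x hx
    have e4 : ℓ (pr sq.u (n + 1 + 1)) = ℓ (pr sq.u (n + 1)) + ℓ (sq.u (n + 1)) := by
      rw [hw]
      exact hadd _ (sq.hd n)
    constructor
    · intro k hk
      have hk2 : k ∈ (f '' sq.Jn n) ∩ AdSet cs (pr sq.u (n + 1)) (sq.Jn n) := by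
        rw [← sq.hb n]
        exact hk
      obtain ⟨t, htJ, hts⟩ := hk2.2
      have htJ' : t ∈ sq.J'n (n + 1) := by
        rw [sq.hc n]
        exact ⟨htJ, ⟨k, hk2.1, by rw [hts]; group⟩⟩
      have hndesc : ¬ cs.IsLeftDescent (sq.u (n + 1)) t :=
        (isMinL_iff cs).mp (sq.he (n + 1)).1 t htJ'
      intro hdesc
      unfold CoxeterSystem.IsLeftDescent at hdesc
      have e1 : s k * pr sq.u (n + 1 + 1) = pr sq.u (n + 1) * (s t * sq.u (n + 1)) := by
        rw [hw, hts]
        group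
      have e2 : ℓ (pr sq.u (n + 1) * (s t * sq.u (n + 1)))
          = ℓ (pr sq.u (n + 1)) + ℓ (s t * sq.u (n + 1)) :=
        hadd _ (mul_mem (simple_mem_WP cs htJ) (sq.hd n))
      have e3 : ℓ (s t * sq.u (n + 1)) = ℓ (sq.u (n + 1)) + 1 :=
        cs.not_isLeftDescent_iff.mp hndesc
      rw [e1, e2, e3, e4] at hdesc
      omega
    · intro j hj
      have hjn : j ∈ sq.Jn n := sq.hmono n hj
      have hndesc : ¬ cs.IsRightDescent (sq.u (n + 1)) j :=
        (isMinR_iff cs).mp (sq.he (n + 1)).2 j hj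
      intro hdesc
      unfold CoxeterSystem.IsRightDescent at hdesc
      have e1 : pr sq.u (n + 1 + 1) * s j = pr sq.u (n + 1) * (sq.u (n + 1) * s j) := by
        rw [hw]
        group
      have e2 : ℓ (pr sq.u (n + 1) * (sq.u (n + 1) * s j))
          = ℓ (pr sq.u (n + 1)) + ℓ (sq.u (n + 1) * s j) :=
        hadd _ (mul_mem (sq.hd n) (simple_mem_WP cs hjn))
      have e3 : ℓ (sq.u (n + 1) * s j) = ℓ (sq.u (n + 1)) + 1 :=
        cs.not_isRightDescent_iff.mp hndesc
      rw [e1, e2, e3, e4] at hdesc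
      omega

/-- The map `S(J, ε) → T(J, ε)`. -/
def Phi (sq : SSeq cs f J) : TSeq cs f J where
  Jn := sq.Jn
  w := fun n => pr sq.u (n + 1)
  hJ0 := sq.hJ0
  hmono := sq.hmono
  hb := by
    intro n
    have h1 := congrArg (fun X => f.symm '' X) (sq.hb n)
    rw [Equiv.symm_image_image] at h1
    rw [h1, Set.image_inter f.symm.injective, Equiv.symm_image_image]
  hc := fun n => min_double_coset cs (sseq_red cs f J sq n).1 (sseq_red cs f J sq n).2
  hd := fun n => ⟨1, one_mem _, sq.u (n + 1), sq.hd n, by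
    show pr sq.u (n + 1 + 1) = 1 * pr sq.u (n + 1) * sq.u (n + 1)
    rw [one_mul, pr_succ]⟩

/-- Recovering the `u`-sequence from a `T`-sequence. -/
def uOf (tq : TSeq cs f J) : ℕ → W
  | 0 => tq.w 0
  | n + 1 => (tq.w n)⁻¹ * tq.w (n + 1)

lemma pr_uOf (tq : TSeq cs f J) : ∀ n, pr (uOf cs f J tq) (n + 1) = tq.w n := by
  intro n
  induction n with
  | zero => rw [pr_one]; rfl
  | succ n ih =>
    rw [pr_succ, ih]
    show tq.w n * ((tq.w n)⁻¹ * tq.w (n + 1)) = tq.w (n + 1)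
    group

/-- Recovering the `J'`-sequence from a `T`-sequence. -/
def J'Of (tq : TSeq cs f J) : ℕ → Set B
  | 0 => f '' J
  | n + 1 => tq.Jn n ∩ AdSet cs (pr (uOf cs f J tq) (n + 1))⁻¹ (f '' tq.Jn n)

lemma conj_mem_WP {K L : Set B} (x : W)
    (h : ∀ k ∈ K, ∃ l ∈ L, x⁻¹ * s k * x = s l) {a : W} (ha : a ∈ WP cs K) :
    x⁻¹ * a * x ∈ WP cs L := by
  have hle : WP cs K ≤ (WP cs L).comap (MulAut.conj x⁻¹).toMonoidHom := by
    rw [WP, Subgroup.closure_le]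
    rintro y ⟨k, hk, rfl⟩
    obtain ⟨l, hl, he⟩ := h k hk
    apply Subgroup.mem_comap.mpr
    have e : (MulAut.conj x⁻¹).toMonoidHom (s k) = x⁻¹ * s k * x := by
      simp [MulAut.conj_apply]
    rw [e, he]
    exact simple_mem_WP cs hl
  have h2 := Subgroup.mem_comap.mp (hle ha)
  have e : (MulAut.conj x⁻¹).toMonoidHom a = x⁻¹ * a * x := by
    simp [MulAut.conj_apply]
  rwa [e] at h2

lemma ad_sub (tq : TSeq cs f J) (n : ℕ) :
    f '' tq.Jn (n + 1) ⊆ AdSet cs (tq.w n) (tq.Jn n) := by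
  rintro k ⟨j₀, hj₀, rfl⟩
  rw [tq.hb n] at hj₀
  obtain ⟨-, y, hy, hyj⟩ := hj₀
  have e : f j₀ = y := by rw [← hyj]; simp
  rw [e]
  exact hy

lemma uOf_mem (tq : TSeq cs f J) (n : ℕ) : uOf cs f J tq (n + 1) ∈ WP cs (tq.Jn n) := by
  obtain ⟨a, haK, b, hbJ, habe⟩ := tq.hd n
  have hconj : (tq.w n)⁻¹ * a * tq.w n ∈ WP cs (tq.Jn n) := by
    apply conj_mem_WP cs (tq.w n) ?_ haK
    intro k hk
    obtain ⟨l, hl, he⟩ := ad_sub cs f J tq n hk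
    exact ⟨l, hl, by rw [he]; group⟩
  have e : uOf cs f J tq (n + 1) = ((tq.w n)⁻¹ * a * tq.w n) * b := by
    show (tq.w n)⁻¹ * tq.w (n + 1) = _
    rw [habe]
    group
  rw [e]
  exact mul_mem hconj hbJ

lemma sOf_he (tq : TSeq cs f J) (n : ℕ) :
    (∀ i ∈ J'Of cs f J tq (n + 1), ¬ cs.IsLeftDescent (uOf cs f J tq (n + 1)) i) ∧
    (∀ i ∈ tq.Jn (n + 1), ¬ cs.IsRightDescent (uOf cs f J tq (n + 1)) i) := by
  have hu' : tq.w (n + 1) = tq.w n * uOf cs f J tq (n + 1) := by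
    show _ = tq.w n * ((tq.w n)⁻¹ * tq.w (n + 1))
    group
  have hRn := rred_of_isMinDC cs (tq.hc n)
  have hLn1 := lred_of_isMinDC cs (tq.hc (n + 1))
  have hRn1 := rred_of_isMinDC cs (tq.hc (n + 1))
  have humem := uOf_mem cs f J tq n
  have hadd : ∀ x ∈ WP cs (tq.Jn n), ℓ (tq.w n * x) = ℓ (tq.w n) + ℓ x :=
    fun x hx => rred_add cs hRn x hx
  have hlw' : ℓ (tq.w (n + 1)) = ℓ (tq.w n) + ℓ (uOf cs f J tq (n + 1)) := by
    rw [hu']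
    exact hadd _ humem
  constructor
  · intro t' ht'
    have ht'' : t' ∈ tq.Jn n ∩ AdSet cs (tq.w n)⁻¹ (f '' tq.Jn n) := by
      have e : pr (uOf cs f J tq) (n + 1) = tq.w n := pr_uOf cs f J tq n
      have ht2 : t' ∈ tq.Jn n ∩ AdSet cs (pr (uOf cs f J tq) (n + 1))⁻¹ (f '' tq.Jn n) := ht'
      rwa [e] at ht2
    obtain ⟨ht'J, k, hkK, hks⟩ := ht''
    have hkAd : k ∈ AdSet cs (tq.w n) (tq.Jn n) := ⟨t', ht'J, by rw [hks]; group⟩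
    have hkK1 : k ∈ f '' tq.Jn (n + 1) := by
      obtain ⟨j₀, hj₀, rfl⟩ := hkK
      refine ⟨j₀, ?_, rfl⟩
      rw [tq.hb n]
      exact ⟨hj₀, ⟨f j₀, hkAd, by simp⟩⟩
    intro hdesc
    unfold CoxeterSystem.IsLeftDescent at hdesc
    have e1 : s k * tq.w (n + 1) = tq.w n * (s t' * uOf cs f J tq (n + 1)) := by
      rw [hu', hks]
      group
    have e2 : ℓ (tq.w n * (s t' * uOf cs f J tq (n + 1)))
        = ℓ (tq.w n) + ℓ (s t' * uOf cs f J tq (n + 1)) :=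
      hadd _ (mul_mem (simple_mem_WP cs ht'J) humem)
    have e3 : ℓ (s k * tq.w (n + 1)) = ℓ (tq.w (n + 1)) + 1 :=
      cs.not_isLeftDescent_iff.mp (hLn1 k hkK1)
    rw [e1, e2] at e3
    omega
  · intro j hj
    have hjn : j ∈ tq.Jn n := tq.hmono n hj
    intro hdesc
    unfold CoxeterSystem.IsRightDescent at hdesc
    have e1 : tq.w (n + 1) * s j = tq.w n * (uOf cs f J tq (n + 1) * s j) := by
      rw [hu', mul_assoc]
    have e2 : ℓ (tq.w n * (uOf cs f J tq (n + 1) * s j))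
        = ℓ (tq.w n) + ℓ (uOf cs f J tq (n + 1) * s j) :=
      hadd _ (mul_mem humem (simple_mem_WP cs hjn))
    have e3 : ℓ (tq.w (n + 1) * s j) = ℓ (tq.w (n + 1)) + 1 :=
      cs.not_isRightDescent_iff.mp (hRn1 j hj)
    rw [e1, e2] at e3
    omega

/-- The inverse map `T(J, ε) → S(J, ε)`. -/
def sOf (tq : TSeq cs f J) : SSeq cs f J where
  Jn := tq.Jn
  J'n := J'Of cs f J tq
  u := uOf cs f J tq
  hJ0 := tq.hJ0
  hJ'0 := rfl
  hmono := tq.hmono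
  hb := by
    intro n
    rw [pr_uOf]
    have h1 := congrArg (fun X => f '' X) (tq.hb n)
    rw [Set.image_inter f.injective] at h1
    rw [h1]
    congr 1
    ext y
    simp
  hc := fun n => rfl
  hd := fun n => uOf_mem cs f J tq n
  he := by
    intro n
    match n with
    | 0 =>
      constructor
      · apply (isMinL_iff cs).mpr
        intro i hi
        have hi' : i ∈ f '' tq.Jn 0 := by
          rw [tq.hJ0]
          exact hi
        exact lred_of_isMinDC cs (tq.hc 0) i hi'
      · apply (isMinR_iff cs).mpr
        intro i hi
        exact rred_of_isMinDC cs (tq.hc 0) i hi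
    | n + 1 =>
      exact ⟨(isMinL_iff cs).mpr (sOf_he cs f J tq n).1,
        (isMinR_iff cs).mpr (sOf_he cs f J tq n).2⟩

lemma sseq_ext {s1 s2 : SSeq cs f J} (h1 : s1.Jn = s2.Jn) (h2 : s1.J'n = s2.J'n)
    (h3 : s1.u = s2.u) : s1 = s2 := by
  cases s1
  cases s2
  simp only at h1 h2 h3
  subst h1
  subst h2
  subst h3
  rfl

lemma tseq_ext {t1 t2 : TSeq cs f J} (h1 : t1.Jn = t2.Jn) (h2 : t1.w = t2.w) : t1 = t2 := by
  cases t1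
  cases t2
  simp only at h1 h2
  subst h1
  subst h2
  rfl


end Machinery

/-- Proposition 2.4: there is a bijection `S(J, ε) → T(J, ε)` given by
`(J_n, J'_n, u_n)_{n≥0} ↦ (J_n, u_0 u_1 ⋯ u_n)_{n≥0}`. -/
theorem statement8 [Finite B] (cs : CoxeterSystem M W) (f : B ≃ B) (e : W ≃* W)
    (hef : ∀ b, e (cs.simple b) = cs.simple (f b)) (J J' : Set B)
    (hJ' : f '' J = J') :
    ∃ Φ : SSeq cs f J → TSeq cs f J,
      (∀ s : SSeq cs f J,
        (Φ s).Jn = s.Jn ∧ ∀ n, (Φ s).w n = pr s.u (n + 1)) ∧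
      Function.Bijective Φ := by
  classical
  refine ⟨Phi cs f J, fun sq => ⟨rfl, fun n => rfl⟩, ?_, ?_⟩
  · intro s1 s2 h
    have hJ : s1.Jn = s2.Jn := congrArg TSeq.Jn h
    have hw : (fun n => pr s1.u (n + 1)) = (fun n => pr s2.u (n + 1)) := congrArg TSeq.w h
    have hpr : ∀ n, pr s1.u n = pr s2.u n := by
      intro n
      cases n with
      | zero => rfl
      | succ n => exact congrFun hw n
    have hu : s1.u = s2.u := by
      funext n
      have e1 := pr_succ s1.u n
      have e2 := pr_succ s2.u n
      have e3 := hpr (n + 1)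
      rw [e1, e2, hpr n] at e3
      exact mul_left_cancel e3
    have hJ' : s1.J'n = s2.J'n := by
      funext n
      cases n with
      | zero => rw [s1.hJ'0, s2.hJ'0]
      | succ n => rw [s1.hc n, s2.hc n, hJ, hu]
    exact sseq_ext cs f J hJ hJ' hu
  · intro tq
    refine ⟨sOf cs f J tq, ?_⟩
    apply tseq_ext cs f J
    · rfl
    · funext n
      exact pr_uOf cs f J tq n

end Lusztig
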